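/- arXiv:2408.09963 — 4 statements merged into one kernel-verified Lean document; each statement's English description precedes it below -/
import Mathlib

section
/- For any natural numbers d, e with d ≥ e, the falling-type polynomials x_q^d := x(x-(q-1))(x-(q^2-1))···(x-(q^{d-1}-1)) satisfy the product formula x_q^d · x_q^e = Σ_{s=0}^{e} C_{d,e,s,q} · x_q^{d+e-s}, where C_{d,e,s,q} = [d choose s]_q · [e choose s]_q · (q^s-1)(q^s-q)···(q^s-q^{s-1}). -/
open Polynomial

/-- The Gaussian binomial coefficient `[n choose k]_q` as a polynomial in `q`. -/
noncomputable def gaussBinom : ℕ → ℕ → Polynomial ℤ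
  | _, 0 => 1
  | 0, _ + 1 => 0
  | n + 1, k + 1 => gaussBinom n k + X ^ (k + 1) * gaussBinom n (k + 1)

/-- `x_q^d := ∏_{j=0}^{d-1} (x - (q^j - 1))`, as an element of `ℤ[q][x]`. -/
noncomputable def xq (d : ℕ) : Polynomial (Polynomial ℤ) :=
  ∏ j ∈ Finset.range d, (X - C ((X : Polynomial ℤ) ^ j - 1))

/-- `C_{d,e,s,q} = [d choose s]_q [e choose s]_q (q^s-1)(q^s-q)⋯(q^s-q^{s-1})`. -/
noncomputable def Cpoly (d e s : ℕ) : Polynomial ℤ :=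
  gaussBinom d s * gaussBinom e s *
    ∏ j ∈ Finset.range s, ((X : Polynomial ℤ) ^ s - X ^ j)

lemma gb_zero (n : ℕ) : gaussBinom n 0 = 1 := by cases n <;> rfl

lemma gb_zero_succ (k : ℕ) : gaussBinom 0 (k+1) = 0 := rfl

lemma gb_succ (n k : ℕ) : gaussBinom (n+1) (k+1)
    = gaussBinom n k + X^(k+1) * gaussBinom n (k+1) := rfl

lemma gb_eq_zero : ∀ n k : ℕ, n < k → gaussBinom n k = 0 := by
  intro n
  induction n with
  | zero => intro k hk; match k, hk with | k+1, _ => rfl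
  | succ m ih =>
    intro k hk
    match k, hk with
    | k+1, hk =>
      rw [gb_succ, ih k (by omega), ih (k+1) (by omega)]
      simp

lemma gb_self : ∀ n : ℕ, gaussBinom n n = 1 := by
  intro n
  induction n with
  | zero => rfl
  | succ m ih => rw [gb_succ, ih, gb_eq_zero m (m+1) (by omega)]; simp

lemma gb_one (n : ℕ) : (X - 1 : Polynomial ℤ) * gaussBinom n 1 = X^n - 1 := by
  induction n with
  | zero => simp [gb_zero_succ]
  | succ m ih =>
    rw [gb_succ, gb_zero]
    ring_nf
    ring_nf at ih
    linear_combination X * ih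

lemma gb_pred (n : ℕ) : (X - 1 : Polynomial ℤ) * gaussBinom (n+1) n = X^(n+1) - 1 := by
  induction n with
  | zero => simp [gb_zero]
  | succ m ih =>
    rw [gb_succ, gb_self]
    linear_combination ih

lemma gb_pascal' : ∀ n k : ℕ, k ≤ n →
    gaussBinom (n+1) (k+1) = gaussBinom n (k+1) + X^(n-k) * gaussBinom n k := by
  intro n
  induction n with
  | zero =>
    intro k hk
    interval_cases k
    simp [gb_succ, gb_zero, gb_zero_succ]
  | succ m ih =>
    intro k hk
    match k with
    | 0 =>
      have r1 := gb_succ (m+1) 0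
      rw [gb_zero] at r1
      rw [Nat.sub_zero, gb_zero]
      linear_combination r1 + gb_one (m+1)
    | j+1 =>
      rcases Nat.lt_or_ge j m with hj | hj
      · obtain ⟨p, rfl⟩ : ∃ p, m = j + 1 + p := ⟨m - (j+1), by omega⟩
        have e1 : j + 1 + p + 1 - (j + 1) = p + 1 := by omega
        have e2 : j + 1 + p - j = p + 1 := by omega
        have e3 : j + 1 + p - (j + 1) = p := by omega
        rw [e1]
        have r1 := gb_succ (j+1+p+1) (j+1)
        have iha := ih (j+1) (by omega)
        have ihb := ih j (by omega)
        rw [e3] at iha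
        rw [e2] at ihb
        have ra := gb_succ (j+1+p) (j+1)
        have rb := gb_succ (j+1+p) j
        linear_combination r1 + X^(j+2) * iha - ra + ihb - X^(p+1) * rb
      · have hjm : j = m := by omega
        subst hjm
        rw [gb_self, gb_eq_zero (j+1) (j+1+1) (by omega)]
        simp [gb_self]

lemma gb_absorb : ∀ d s : ℕ, s + 1 ≤ d →
    ((X:Polynomial ℤ)^(s+1) - 1) * gaussBinom d (s+1)
      = (X^(d-s) - 1) * gaussBinom d s := by
  intro d
  induction d with
  | zero => intro s hs; omega
  | succ c ih =>
    intro s hs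
    rcases Nat.lt_or_ge (s+1) (c+1) with hlt | hge
    · match s with
      | 0 =>
        rw [gb_zero]
        have e : c + 1 - 0 = c + 1 := by omega
        rw [e]
        linear_combination gb_one (c+1)
      | t+1 =>
        obtain ⟨p, rfl⟩ : ∃ p, c = t + 2 + p := ⟨c - (t+2), by omega⟩
        have e1 : t + 2 + p + 1 - (t + 1) = p + 2 := by omega
        have e2 : t + 2 + p - (t + 1) = p + 1 := by omega
        have e3 : t + 2 + p - t = p + 2 := by omega
        rw [e1]
        have r1 := gb_succ (t+2+p) (t+1)
        have r2 := gb_succ (t+2+p) t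
        have ih1 := ih (t+1) (by omega)
        have ih2 := ih t (by omega)
        rw [e2] at ih1
        rw [e3] at ih2
        linear_combination (X^(t+2)-1) * r1 - (X^(p+2)-1) * r2 + X^(t+2) * ih1 + ih2
    · have hsc : s = c := by omega
      subst hsc
      have e : s + 1 - s = 1 := by omega
      rw [e, gb_self, pow_one]
      linear_combination -gb_pred s

lemma phi_succ (s : ℕ) :
    (∏ j ∈ Finset.range (s+1), ((X : Polynomial ℤ) ^ (s+1) - X ^ j))
      = X^s * (X^(s+1) - 1) * ∏ j ∈ Finset.range s, ((X : Polynomial ℤ) ^ s - X ^ j) := by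
  rw [Finset.prod_range_succ']
  have h1 : ∀ j ∈ Finset.range s,
      ((X : Polynomial ℤ) ^ (s+1) - X ^ (j+1)) = X * (X^s - X^j) := by
    intro j _
    rw [mul_sub, ← pow_succ', ← pow_succ']
  rw [Finset.prod_congr rfl h1, Finset.prod_mul_distrib, Finset.prod_const,
    Finset.card_range]
  ring

lemma cpoly_zero (d e : ℕ) : Cpoly d e 0 = 1 := by
  simp [Cpoly, gb_zero]

lemma cpoly_top (d e : ℕ) : Cpoly d e (e+1) = 0 := by
  simp [Cpoly, gb_eq_zero e (e+1) (by omega)]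

lemma cpoly_rec (d e s : ℕ) (hse : s ≤ e) (hsd : s + 1 ≤ d) :
    Cpoly d (e+1) (s+1)
      = Cpoly d e (s+1) + ((X:Polynomial ℤ)^(d+e-s) - X^e) * Cpoly d e s := by
  obtain ⟨m, rfl⟩ : ∃ m, e = s + m := ⟨e - s, by omega⟩
  obtain ⟨n, rfl⟩ : ∃ n, d = s + 1 + n := ⟨d - (s+1), by omega⟩
  have e1 : s + m - s = m := by omega
  have e2 : s + 1 + n - s = n + 1 := by omega
  have e3 : s + 1 + n + (s + m) - s = s + 1 + n + m := by omega
  have hp := gb_pascal' (s+m) s hse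
  rw [e1] at hp
  have ha := gb_absorb (s+1+n) s hsd
  rw [e2] at ha
  rw [e3]
  unfold Cpoly
  rw [phi_succ, hp]
  linear_combination (X^(s+m) * gaussBinom (s+m) s *
    (∏ j ∈ Finset.range s, ((X:Polynomial ℤ)^s - X^j))) * ha

lemma xq_succ (m : ℕ) :
    xq (m+1) = xq m * (X - C ((X : Polynomial ℤ) ^ m - 1)) :=
  Finset.prod_range_succ _ _

lemma xq_step (m e : ℕ) :
    xq m * (X - C ((X : Polynomial ℤ) ^ e - 1))
      = xq (m+1) + C ((X : Polynomial ℤ) ^ m - X ^ e) * xq m := by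
  rw [xq_succ]
  simp only [map_sub, map_pow, map_one]
  ring

theorem xq_mul_xq (d e : ℕ) (h : e ≤ d) :
    xq d * xq e = ∑ s ∈ Finset.range (e + 1), C (Cpoly d e s) * xq (d + e - s) := by
  induction e with
  | zero =>
    simp [cpoly_zero, xq]
  | succ n ih =>
    have IH := ih (by omega)
    show xq d * xq (n+1) = ∑ s ∈ Finset.range (n+2), C (Cpoly d (n+1) s) * xq (d+n+1-s)
    have lhs_eq : xq d * xq (n+1)
        = (∑ s ∈ Finset.range (n+1), C (Cpoly d n s) * xq (d+n-s))
            * (X - C ((X : Polynomial ℤ) ^ n - 1)) := by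
      rw [xq_succ, ← IH]; ring
    rw [lhs_eq, Finset.sum_mul]
    have step : ∀ s ∈ Finset.range (n+1),
        C (Cpoly d n s) * xq (d+n-s) * (X - C ((X : Polynomial ℤ) ^ n - 1))
          = C (Cpoly d n s) * xq (d+n-s+1)
            + C (Cpoly d n s) * C ((X : Polynomial ℤ) ^ (d+n-s) - X ^ n) * xq (d+n-s) := by
      intro s _
      rw [mul_assoc, xq_step (d+n-s) n]
      ring
    rw [Finset.sum_congr rfl step, Finset.sum_add_distrib]
    rw [Finset.sum_range_succ' (fun s => C (Cpoly d (n+1) s) * xq (d+n+1-s)) (n+1)]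
    have rhs_step : ∀ i ∈ Finset.range (n+1),
        C (Cpoly d (n+1) (i+1)) * xq (d+n+1-(i+1))
          = C (Cpoly d n (i+1)) * xq (d+n-i)
            + C (Cpoly d n i) * C ((X : Polynomial ℤ) ^ (d+n-i) - X ^ n) * xq (d+n-i) := by
      intro i hi
      simp only [Finset.mem_range] at hi
      have e1 : d+n+1-(i+1) = d+n-i := by omega
      rw [e1, cpoly_rec d n i (by omega) (by omega), map_add, map_mul]
      ring
    rw [Finset.sum_congr rfl rhs_step, Finset.sum_add_distrib, cpoly_zero, map_one, one_mul]
    have first_eq : ∑ s ∈ Finset.range (n+1), C (Cpoly d n s) * xq (d+n-s+1)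
        = (∑ i ∈ Finset.range (n+1), C (Cpoly d n (i+1)) * xq (d+n-i)) + xq (d+n+1) := by
      rw [Finset.sum_range_succ' (fun s => C (Cpoly d n s) * xq (d+n-s+1)) n,
        Finset.sum_range_succ (fun i => C (Cpoly d n (i+1)) * xq (d+n-i)) n]
      have e2 : ∀ i ∈ Finset.range n, C (Cpoly d n (i+1)) * xq (d+n-(i+1)+1)
          = C (Cpoly d n (i+1)) * xq (d+n-i) := by
        intro i hi
        simp only [Finset.mem_range] at hi
        have : d+n-(i+1)+1 = d+n-i := by omega
        rw [this]
      rw [Finset.sum_congr rfl e2, cpoly_zero, cpoly_top, map_one, map_zero, one_mul,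
        zero_mul, add_zero]
      simp
    rw [first_eq]
    simp only [Nat.sub_zero]
    ring
end

section
/- Let G = ([n], E) be a graph, q a prime power, and U a d-dimensional totally-isotropic subspace of the graphical matrix space B_G ≤ Λ(n,q). If the Plücker coordinate of U at a size-d set R ⊆ [n] is nonzero (i.e., the d×d submatrix of a basis matrix of U with rows indexed by R is invertible), then R is an independent set of G. -/
open Matrix

def elemAlt {F : Type} [Field F] {n : ℕ} (i j : Fin n) : Matrix (Fin n) (Fin n) F :=
  fun a b => if a = i ∧ b = j then 1 else if a = j ∧ b = i then -1 else 0

noncomputable def graphSpace {n : ℕ} (F : Type) [Field F] (G : SimpleGraph (Fin n)) :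
    Submodule F (Matrix (Fin n) (Fin n) F) :=
  Submodule.span F {M | ∃ i j, G.Adj i j ∧ M = elemAlt i j}

def IsTotallyIsotropic {F : Type} [Field F] {n : ℕ}
    (𝓑 : Submodule F (Matrix (Fin n) (Fin n) F)) (U : Submodule F (Fin n → F)) : Prop :=
  ∀ u ∈ U, ∀ v ∈ U, ∀ B ∈ 𝓑, u ⬝ᵥ B *ᵥ v = 0

lemma dot_elemAlt {F : Type} [Field F] {n : ℕ} (u v : Fin n → F) (i j : Fin n)
    (hij : i ≠ j) : u ⬝ᵥ (elemAlt i j : Matrix (Fin n) (Fin n) F) *ᵥ v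
      = u i * v j - u j * v i := by
  have hmv : ∀ a, ((elemAlt i j : Matrix (Fin n) (Fin n) F) *ᵥ v) a
      = (if a = i then v j else if a = j then - v i else 0) := by
    intro a
    simp only [mulVec, dotProduct, elemAlt]
    by_cases hai : a = i
    · subst hai
      simp [hij, Finset.sum_ite_eq' Finset.univ j]
    · by_cases haj : a = j
      · subst haj
        simp [hai, Finset.sum_ite_eq' Finset.univ i]
      · simp [hai, haj]
  simp only [dotProduct, hmv]
  rw [Finset.sum_eq_add_of_mem i j (Finset.mem_univ i) (Finset.mem_univ j) hij]
  · simp [hij, Ne.symm hij, mul_comm, sub_eq_add_neg]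
  · intro c _ hc
    simp [hc.1, hc.2]

lemma mulVec_mem_span {F : Type} [Field F] {n d : ℕ} (T : Matrix (Fin n) (Fin d) F)
    (c : Fin d → F) : T *ᵥ c ∈ Submodule.span F (Set.range Tᵀ) := by
  have : T *ᵥ c = ∑ j, c j • Tᵀ j := by
    ext a
    simp [mulVec, dotProduct, mul_comm, transpose]
  rw [this]
  exact Submodule.sum_mem _ fun j _ =>
    Submodule.smul_mem _ _ (Submodule.subset_span ⟨j, rfl⟩)

/-- If a totally-isotropic subspace `U` of the graphical matrix space of `G` has
nonzero Plücker coordinate at a size-`d` set `R` (given as the range of an injective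
`f : Fin d → Fin n`), then `R` is an independent set of `G`. -/
theorem plucker_support_indep {F : Type} [Field F] [Fintype F] {n d : ℕ}
    (G : SimpleGraph (Fin n)) (U : Submodule F (Fin n → F))
    (htot : IsTotallyIsotropic (graphSpace F G) U)
    (T : Matrix (Fin n) (Fin d) F)
    (hind : LinearIndependent F Tᵀ)
    (hspan : Submodule.span F (Set.range Tᵀ) = U)
    (f : Fin d → Fin n) (hf : Function.Injective f)
    (hdet : (T.submatrix f id).det ≠ 0) :
    ∀ u ∈ Set.range f, ∀ v ∈ Set.range f, ¬G.Adj u v := by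
  rintro _ ⟨a, rfl⟩ _ ⟨b, rfl⟩ hadj
  set T' := T.submatrix f id with hT'
  have hunit : IsUnit T'.det := isUnit_iff_ne_zero.mpr hdet
  -- the two witness vectors
  set cu : Fin d → F := T'⁻¹ *ᵥ Pi.single a 1 with hcu
  set cv : Fin d → F := T'⁻¹ *ᵥ Pi.single b 1 with hcv
  have hval : ∀ (c : Fin d → F) (i : Fin d), (T *ᵥ (T'⁻¹ *ᵥ c)) (f i)
      = c i := by
    intro c i
    have : (T *ᵥ (T'⁻¹ *ᵥ c)) (f i) = (T' *ᵥ (T'⁻¹ *ᵥ c)) i := by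
      simp [hT', mulVec, dotProduct, submatrix]
    rw [this, mulVec_mulVec, Matrix.mul_nonsing_inv _ hunit, one_mulVec]
  have hu : T *ᵥ cu ∈ U := hspan ▸ mulVec_mem_span T cu
  have hv : T *ᵥ cv ∈ U := hspan ▸ mulVec_mem_span T cv
  have hA : (elemAlt (f a) (f b) : Matrix (Fin n) (Fin n) F) ∈ graphSpace F G :=
    Submodule.subset_span ⟨f a, f b, hadj, rfl⟩
  have h0 := htot _ hu _ hv _ hA
  have hne : f a ≠ f b := fun h => G.ne_of_adj hadj h
  rw [dot_elemAlt _ _ _ _ hne, hval, hval, hval, hval] at h0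
  have hab : a ≠ b := fun h => hne (congrArg f h)
  simp [hab, Ne.symm hab] at h0
end

section
/- Let U ≤ F_q^{n₁} have dimension d and V ≤ F_q^{n₂} have dimension e, with d ≥ e. For 0 ≤ s ≤ e, the number of subspaces W ≤ F_q^{n₁+n₂} = F_q^{n₁} ⊕ F_q^{n₂} of dimension d+e-s with π₁(W) = U and π₂(W) = V equals [d choose s]_q · [e choose s]_q · (q^s - 1)(q^s - q)···(q^s - q^{s-1}), where π₁, π₂ are the coordinate projections. -/
open Polynomial Matrix Finset Module Submodule

noncomputable def Bpoly (n s : ℕ) : Polynomial ℤ := ∏ j ∈ range s, (X ^ n - X ^ j)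

lemma gauss_eq_zero_of_lt : ∀ {n k : ℕ}, n < k → gaussBinom n k = 0
  | 0, k + 1, _ => rfl
  | n + 1, k + 1, h => by
      show gaussBinom n k + X ^ (k + 1) * gaussBinom n (k + 1) = 0
      rw [gauss_eq_zero_of_lt (by omega), gauss_eq_zero_of_lt (by omega)]
      ring

lemma Bpoly_succ_succ (n s : ℕ) :
    Bpoly (n + 1) (s + 1) = (X ^ (n + 1) - 1) * (X ^ s * Bpoly n s) := by
  rw [Bpoly, prod_range_succ']
  have h : ∀ j ∈ range s, (X : Polynomial ℤ) ^ (n+1) - X ^ (j+1) = X * (X ^ n - X ^ j) := by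
    intro j _; ring
  rw [prod_congr rfl h, prod_mul_distrib, prod_const, card_range]
  rw [Bpoly]; ring

lemma gauss_mul_Bpoly : ∀ n s : ℕ, gaussBinom n s * Bpoly s s = Bpoly n s := by
  intro n
  induction n with
  | zero =>
    intro s
    cases s with
    | zero => simp [Bpoly, gaussBinom]
    | succ s =>
      show (0 : Polynomial ℤ) * _ = _
      rw [zero_mul, Bpoly, eq_comm]
      refine prod_eq_zero (mem_range.mpr (Nat.succ_pos s)) ?_
      simp
  | succ n ih =>
    intro s
    cases s with
    | zero => simp [Bpoly, gaussBinom]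
    | succ s =>
      have h1 := ih s
      have h2 := ih (s + 1)
      have h3 : Bpoly n (s + 1) = Bpoly n s * (X ^ n - X ^ s) := by
        rw [Bpoly, prod_range_succ, Bpoly]
      show (gaussBinom n s + X ^ (s + 1) * gaussBinom n (s + 1)) * _ = _
      rw [Bpoly_succ_succ, Bpoly_succ_succ]
      rw [Bpoly_succ_succ, h3] at h2
      linear_combination ((X:Polynomial ℤ) ^ (s+1) - 1) * X ^ s * h1 + X ^ (s+1) * h2


section IntIdent
variable (q : ℤ)

lemma gauss_eval_mul (n s : ℕ) :
    (gaussBinom n s).eval q * ∏ j ∈ range s, (q ^ s - q ^ j) = ∏ j ∈ range s, (q ^ n - q ^ j) := by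
  have := congrArg (eval q) (gauss_mul_Bpoly n s)
  simpa [Bpoly, eval_prod] using this

lemma aprod_pos (hq : 2 ≤ q) (k : ℕ) : 0 < ∏ j ∈ range k, (q ^ k - q ^ j) := by
  refine prod_pos fun j hj => ?_
  have hj' : j < k := mem_range.mp hj
  have : q ^ j < q ^ k := pow_lt_pow_right₀ (by omega) hj'
  omega

lemma bprod_fact (n s : ℕ) (hs : s ≤ n) :
    ∏ j ∈ range s, (q ^ n - q ^ j) = (∏ j ∈ range s, q ^ j) * ∏ j ∈ range s, (q ^ (n - j) - 1) := by
  rw [← prod_mul_distrib]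
  refine prod_congr rfl fun j hj => ?_
  have hj' : j < s := mem_range.mp hj
  have h : q ^ j * q ^ (n - j) = q ^ n := by rw [← pow_add]; congr 1; omega
  rw [mul_sub, mul_one, h]

lemma prod_split (d s : ℕ) (hs : s ≤ d) :
    ∏ j ∈ range d, (q ^ (d - j) - 1) =
      (∏ j ∈ range s, (q ^ (d - j) - 1)) * ∏ j ∈ range (d - s), (q ^ (d - s - j) - 1) := by
  have h : d = s + (d - s) := by omega
  calc ∏ j ∈ range d, (q ^ (d - j) - 1)
      = ∏ j ∈ range (s + (d - s)), (q ^ (d - j) - 1) := by rw [← h]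
    _ = (∏ j ∈ range s, (q ^ (d - j) - 1)) * ∏ j ∈ range (d - s), (q ^ (d - (s + j)) - 1) :=
        prod_range_add _ _ _
    _ = _ := by
        refine congrArg _ (prod_congr rfl fun j hj => ?_)
        rw [Nat.sub_sub]

lemma gauss_symm_eval (hq : 2 ≤ q) {d s : ℕ} (hs : s ≤ d) :
    (gaussBinom d (d - s)).eval q = (gaussBinom d s).eval q := by
  have h1 := gauss_eval_mul q d s
  have h2 := gauss_eval_mul q d (d - s)
  have e1 := bprod_fact q d s hs
  have e2 := bprod_fact q (d - s) (d - s) le_rfl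
  have e3 := bprod_fact q d (d - s) (Nat.sub_le d s)
  have e4 := bprod_fact q s s le_rfl
  have e5 := (prod_split q d s hs).symm
  have e6 := (prod_split q d (d - s) (Nat.sub_le d s)).symm
  rw [Nat.sub_sub_self hs] at e6
  have main : (∏ j ∈ range (d-s), (q ^ d - q ^ j)) * (∏ j ∈ range s, (q ^ s - q ^ j)) =
      (∏ j ∈ range s, (q ^ d - q ^ j)) * (∏ j ∈ range (d-s), (q ^ (d-s) - q ^ j)) := by
    rw [e1, e2, e3, e4]
    linear_combination (∏ j ∈ range s, q ^ j) * (∏ j ∈ range (d-s), q ^ j) * e6 -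
      (∏ j ∈ range s, q ^ j) * (∏ j ∈ range (d-s), q ^ j) * e5
  have hcancel : (∏ j ∈ range s, (q ^ s - q ^ j)) * (∏ j ∈ range (d-s), (q ^ (d-s) - q ^ j)) ≠ 0 :=
    mul_ne_zero (aprod_pos q hq s).ne' (aprod_pos q hq (d - s)).ne'
  refine mul_right_cancel₀ hcancel ?_
  linear_combination (∏ j ∈ range s, (q ^ s - q ^ j)) * h2 -
    (∏ j ∈ range (d-s), (q ^ (d-s) - q ^ j)) * h1 + main

end IntIdent


section CardSub
variable {F : Type} [Field F] [Fintype F]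

local notation "q" => Fintype.card F

section CardSubspaces
variable {M : Type} [AddCommGroup M] [Module F M] [Finite M]

lemma card_subspaces_mul (s : ℕ) (hs : s ≤ finrank F M) :
    Nat.card {W : Submodule F M // finrank F ↥W = s} *
      ∏ j ∈ range s, (q ^ s - q ^ j) =
    ∏ j ∈ range s, (q ^ finrank F M - q ^ j) := by
  classical
  letI : Fintype M := Fintype.ofFinite M
  set g : {t : Fin s → M // LinearIndependent F t} → {W : Submodule F M // finrank F ↥W = s} :=
    fun t => ⟨span F (Set.range t.1), by
      rw [finrank_span_eq_card t.2, Fintype.card_fin]⟩ with hg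
  have hfib : ∀ W, Nat.card {t // g t = W} = ∏ j ∈ range s, (q ^ s - q ^ j) := by
    intro W
    have e : {t // g t = W} ≃ {u : Fin s → ↥W.1 // LinearIndependent F u} :=
      { toFun := fun t => ⟨fun i => ⟨t.1.1 i, by
          have : W.1 = span F (Set.range t.1.1) := (congrArg Subtype.val t.2).symm
          rw [this]; exact subset_span (Set.mem_range_self i)⟩, by
          exact LinearIndependent.of_comp W.1.subtype t.1.2⟩
        invFun := fun u => ⟨⟨⇑W.1.subtype ∘ u.1, u.2.map' W.1.subtype (ker_subtype _)⟩, by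
          refine Subtype.ext ?_
          show span F (Set.range (⇑W.1.subtype ∘ u.1)) = W.1
          refine eq_of_le_of_finrank_le (span_le.mpr ?_) ?_
          · rintro x ⟨i, rfl⟩; exact (u.1 i).2
          · rw [W.2, finrank_span_eq_card (u.2.map' W.1.subtype (ker_subtype _)),
              Fintype.card_fin]⟩
        left_inv := fun t => Subtype.ext (Subtype.ext (funext fun i => rfl))
        right_inv := fun u => Subtype.ext (funext fun i => Subtype.ext rfl) }
    rw [Nat.card_congr e, card_linearIndependent (le_of_eq W.2.symm), W.2]
    exact Fin.prod_univ_eq_prod_range (fun j => q ^ s - q ^ j) s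
  have h1 : Nat.card {t : Fin s → M // LinearIndependent F t} =
      ∏ j ∈ range s, (q ^ finrank F M - q ^ j) := by
    rw [card_linearIndependent hs]
    exact Fin.prod_univ_eq_prod_range (fun j => q ^ finrank F M - q ^ j) s
  letI : Fintype {W : Submodule F M // finrank F ↥W = s} := Fintype.ofFinite _
  letI : ∀ W, Fintype {t // g t = W} := fun W => Fintype.ofFinite _
  have h2 : Nat.card ((W : {W : Submodule F M // finrank F ↥W = s}) × {t // g t = W}) =
      Nat.card {W : Submodule F M // finrank F ↥W = s} * ∏ j ∈ range s, (q ^ s - q ^ j) := by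
    rw [Nat.card_eq_fintype_card, Fintype.card_sigma,
      Finset.sum_congr rfl (fun W _ => by rw [← Nat.card_eq_fintype_card, hfib W]),
      Finset.sum_const, Finset.card_univ, smul_eq_mul, Nat.card_eq_fintype_card]
  rw [← h2, Nat.card_congr (Equiv.sigmaFiberEquiv g), h1]

end CardSubspaces

end CardSub

section CardGL
variable {F : Type} [Field F] [Fintype F]

local notation "q" => Fintype.card F

lemma card_linearEquivs (A B : Type) [AddCommGroup A] [Module F A] [Finite A]
    [AddCommGroup B] [Module F B] [Finite B] (s : ℕ)
    (hA : finrank F A = s) (hB : finrank F B = s) :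
    Nat.card (A ≃ₗ[F] B) = ∏ j ∈ range s, (q ^ s - q ^ j) := by
  classical
  rcases Nat.eq_zero_or_pos s with rfl | hspos
  · haveI : Subsingleton A := (Module.finrank_zero_iff (R := F)).mp hA
    haveI : Subsingleton B := (Module.finrank_zero_iff (R := F)).mp hB
    rw [Finset.range_zero, Finset.prod_empty]
    rw [Nat.card_eq_one_iff_unique]
    constructor
    · exact ⟨fun f g => by ext x; exact Subsingleton.elim _ _⟩
    · exact ⟨LinearEquiv.ofLinear 0 0
        (LinearMap.ext fun x => Subsingleton.elim _ _)
        (LinearMap.ext fun x => Subsingleton.elim _ _)⟩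
  · haveI : Nonempty (Fin s) := Fin.pos_iff_nonempty.mp hspos
    let b : Basis (Fin s) F A := finBasisOfFinrankEq F A hA
    have e : (A ≃ₗ[F] B) ≃ {t : Fin s → B // LinearIndependent F t} :=
      { toFun := fun f => ⟨⇑f ∘ ⇑b, b.linearIndependent.map' f.toLinearMap f.ker⟩
        invFun := fun t => b.equiv
          (basisOfLinearIndependentOfCardEqFinrank t.2 (by rw [Fintype.card_fin, hB]))
          (Equiv.refl _)
        left_inv := fun f => by
          apply LinearEquiv.toLinearMap_injective
          apply b.ext
          intro i
          simp [Basis.equiv_apply, coe_basisOfLinearIndependentOfCardEqFinrank]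
        right_inv := fun t => by
          refine Subtype.ext (funext fun i => ?_)
          simp [Basis.equiv_apply, coe_basisOfLinearIndependentOfCardEqFinrank] }
    rw [Nat.card_congr e, card_linearIndependent (le_of_eq hB.symm), hB]
    exact Fin.prod_univ_eq_prod_range (fun j => q ^ s - q ^ j) s

end CardGL

section Struct
variable {F : Type} [Field F]
variable {M N : Type} [AddCommGroup M] [Module F M] [AddCommGroup N] [Module F N]
variable (U : Submodule F M) (V : Submodule F N)

/-- First projection `U.prod V → U`. -/
def pl1 : ↥(U.prod V) →ₗ[F] ↥U :=
  (LinearMap.fst F M N).restrict fun _ hx => (Submodule.mem_prod.mp hx).1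

def pl2 : ↥(U.prod V) →ₗ[F] ↥V :=
  (LinearMap.snd F M N).restrict fun _ hx => (Submodule.mem_prod.mp hx).2

noncomputable def rho (U₀ : Submodule F ↥U) (V₀ : Submodule F ↥V)
    (φ : (↥U ⧸ U₀) ≃ₗ[F] ↥V ⧸ V₀) : ↥(U.prod V) →ₗ[F] ↥V ⧸ V₀ :=
  (V₀.mkQ.comp (pl2 U V)) - (φ.toLinearMap.comp (U₀.mkQ.comp (pl1 U V)))

noncomputable def psi (U₀ : Submodule F ↥U) (V₀ : Submodule F ↥V)
    (φ : (↥U ⧸ U₀) ≃ₗ[F] ↥V ⧸ V₀) : Submodule F (M × N) :=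
  (LinearMap.ker (rho U V U₀ V₀ φ)).map (U.prod V).subtype

variable {U V}

lemma mem_psi {U₀ : Submodule F ↥U} {V₀ : Submodule F ↥V}
    {φ : (↥U ⧸ U₀) ≃ₗ[F] ↥V ⧸ V₀} (x : M × N) :
    x ∈ psi U V U₀ V₀ φ ↔ ∃ (hu : x.1 ∈ U) (hv : x.2 ∈ V),
      φ (Submodule.Quotient.mk ⟨x.1, hu⟩) = Submodule.Quotient.mk ⟨x.2, hv⟩ := by
  constructor
  · rintro ⟨y, hy, rfl⟩
    have hy' : V₀.mkQ (pl2 U V y) - φ (U₀.mkQ (pl1 U V y)) = 0 := hy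
    exact ⟨y.2.1, y.2.2, (sub_eq_zero.mp hy').symm⟩
  · rintro ⟨hu, hv, h⟩
    refine ⟨⟨x, Submodule.mem_prod.mpr ⟨hu, hv⟩⟩, ?_, rfl⟩
    show V₀.mkQ (pl2 U V ⟨x, Submodule.mem_prod.mpr ⟨hu, hv⟩⟩) -
      φ (U₀.mkQ (pl1 U V ⟨x, Submodule.mem_prod.mpr ⟨hu, hv⟩⟩)) = 0
    rw [sub_eq_zero]
    exact h.symm

lemma psi_map_fst (U₀ : Submodule F ↥U) (V₀ : Submodule F ↥V)
    (φ : (↥U ⧸ U₀) ≃ₗ[F] ↥V ⧸ V₀) :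
    (psi U V U₀ V₀ φ).map (LinearMap.fst F M N) = U := by
  apply le_antisymm
  · rintro _ ⟨x, hx, rfl⟩
    obtain ⟨hu, -, -⟩ := (mem_psi x).mp hx
    exact hu
  · intro u hu
    obtain ⟨v, hv⟩ := V₀.mkQ_surjective (φ (Submodule.Quotient.mk ⟨u, hu⟩))
    exact ⟨(u, ↑v), (mem_psi _).mpr ⟨hu, v.2, hv.symm⟩, rfl⟩

lemma psi_map_snd (U₀ : Submodule F ↥U) (V₀ : Submodule F ↥V)
    (φ : (↥U ⧸ U₀) ≃ₗ[F] ↥V ⧸ V₀) :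
    (psi U V U₀ V₀ φ).map (LinearMap.snd F M N) = V := by
  apply le_antisymm
  · rintro _ ⟨x, hx, rfl⟩
    obtain ⟨-, hv, -⟩ := (mem_psi x).mp hx
    exact hv
  · intro v hv
    obtain ⟨u, hu⟩ := U₀.mkQ_surjective (φ.symm (Submodule.Quotient.mk ⟨v, hv⟩))
    refine ⟨(↑u, v), (mem_psi _).mpr ⟨u.2, hv, ?_⟩, rfl⟩
    have : φ (U₀.mkQ u) = Submodule.Quotient.mk ⟨v, hv⟩ := by
      rw [hu]; exact φ.apply_symm_apply _
    exact this

/-- The product of two submodules is equivalent to the product of the types. -/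
noncomputable def prodSubEquiv : ↥(U.prod V) ≃ₗ[F] ↥U × ↥V := by
  refine LinearEquiv.ofBijective ((pl1 U V).prod (pl2 U V)) ⟨?_, ?_⟩
  · intro x y h
    have h1 : x.1.1 = y.1.1 := congrArg (Subtype.val ∘ Prod.fst) h
    have h2 : x.1.2 = y.1.2 := congrArg (Subtype.val ∘ Prod.snd) h
    exact Subtype.ext (Prod.ext h1 h2)
  · rintro ⟨u, v⟩
    exact ⟨⟨(↑u, ↑v), Submodule.mem_prod.mpr ⟨u.2, v.2⟩⟩, rfl⟩

lemma psi_finrank [Finite M] [Finite N] (U₀ : Submodule F ↥U) (V₀ : Submodule F ↥V)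
    (φ : (↥U ⧸ U₀) ≃ₗ[F] ↥V ⧸ V₀) :
    finrank F ↥(psi U V U₀ V₀ φ) + finrank F (↥V ⧸ V₀) = finrank F ↥U + finrank F ↥V := by
  have h1 : finrank F ↥(psi U V U₀ V₀ φ) = finrank F ↥(LinearMap.ker (rho U V U₀ V₀ φ)) :=
    (Submodule.equivMapOfInjective _ (Submodule.injective_subtype _) _).symm.finrank_eq
  have h2 : Function.Surjective (rho U V U₀ V₀ φ) := by
    intro y
    obtain ⟨v, rfl⟩ := V₀.mkQ_surjective y
    refine ⟨⟨((0 : M), ↑v), Submodule.mem_prod.mpr ⟨U.zero_mem, v.2⟩⟩, ?_⟩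
    have hp1 : pl1 U V ⟨((0 : M), ↑v), Submodule.mem_prod.mpr ⟨U.zero_mem, v.2⟩⟩ = 0 := rfl
    have hp2 : pl2 U V ⟨((0 : M), ↑v), Submodule.mem_prod.mpr ⟨U.zero_mem, v.2⟩⟩ = v := rfl
    simp [rho, hp1, hp2]
  have h3 := LinearMap.finrank_range_add_finrank_ker (rho U V U₀ V₀ φ)
  have h4 : finrank F ↥(LinearMap.range (rho U V U₀ V₀ φ)) = finrank F (↥V ⧸ V₀) := by
    rw [LinearMap.range_eq_top.mpr h2]
    exact finrank_top F _
  have h5 : finrank F ↥(U.prod V) = finrank F ↥U + finrank F ↥V := by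
    rw [(prodSubEquiv (U := U) (V := V)).finrank_eq, Module.finrank_prod]
  omega

lemma psi_rec_U₀ (U₀ : Submodule F ↥U) (V₀ : Submodule F ↥V)
    (φ : (↥U ⧸ U₀) ≃ₗ[F] ↥V ⧸ V₀) (u : ↥U) :
    u ∈ U₀ ↔ ((u : M), (0 : N)) ∈ psi U V U₀ V₀ φ := by
  rw [mem_psi]
  constructor
  · intro h
    refine ⟨u.2, V.zero_mem, ?_⟩
    have h1 : (⟨(u : M), u.2⟩ : ↥U) = u := rfl
    have h2 : (⟨(0 : N), V.zero_mem⟩ : ↥V) = 0 := rfl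
    rw [h1, h2, (Submodule.Quotient.mk_eq_zero U₀).mpr h]
    simp
  · rintro ⟨hu, hv, h⟩
    have h1 : (⟨(u : M), hu⟩ : ↥U) = u := rfl
    have h2 : (⟨(0 : N), hv⟩ : ↥V) = 0 := rfl
    rw [h1, h2] at h
    simp only [Submodule.Quotient.mk_zero] at h
    rw [← Submodule.Quotient.mk_eq_zero U₀]
    exact φ.map_eq_zero_iff.mp h
    
lemma psi_rec_V₀ (U₀ : Submodule F ↥U) (V₀ : Submodule F ↥V)
    (φ : (↥U ⧸ U₀) ≃ₗ[F] ↥V ⧸ V₀) (v : ↥V) :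
    v ∈ V₀ ↔ ((0 : M), (v : N)) ∈ psi U V U₀ V₀ φ := by
  rw [mem_psi]
  constructor
  · intro h
    refine ⟨U.zero_mem, v.2, ?_⟩
    have h1 : (⟨(0 : M), U.zero_mem⟩ : ↥U) = 0 := rfl
    have h2 : (⟨(v : N), v.2⟩ : ↥V) = v := rfl
    rw [h1, h2, (Submodule.Quotient.mk_eq_zero V₀).mpr h]
    simp
  · rintro ⟨hu, hv, h⟩
    have h1 : (⟨(0 : M), hu⟩ : ↥U) = 0 := rfl
    have h2 : (⟨(v : N), hv⟩ : ↥V) = v := rfl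
    rw [h1, h2] at h
    simp only [Submodule.Quotient.mk_zero, map_zero] at h
    rw [← Submodule.Quotient.mk_eq_zero V₀]
    exact h.symm

lemma psi_rec_phi (U₀ : Submodule F ↥U) (V₀ : Submodule F ↥V)
    (φ : (↥U ⧸ U₀) ≃ₗ[F] ↥V ⧸ V₀) (u : ↥U) (v : ↥V) :
    φ (Submodule.Quotient.mk u) = Submodule.Quotient.mk v ↔
      ((u : M), (v : N)) ∈ psi U V U₀ V₀ φ := by
  rw [mem_psi]
  constructor
  · intro h; exact ⟨u.2, v.2, h⟩
  · rintro ⟨hu, hv, h⟩; exact h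

lemma psi_surjective [Finite M] [Finite N] (W : Submodule F (M × N))
    (hWU : W.map (LinearMap.fst F M N) = U) (hWV : W.map (LinearMap.snd F M N) = V) :
    ∃ (U₀ : Submodule F ↥U) (V₀ : Submodule F ↥V) (φ : (↥U ⧸ U₀) ≃ₗ[F] ↥V ⧸ V₀),
      psi U V U₀ V₀ φ = W ∧
      finrank F ↥U₀ + finrank F ↥V = finrank F ↥W ∧
      finrank F ↥V₀ + finrank F ↥U = finrank F ↥W := by
  classical
  -- restrictions of the projections
  set π : ↥W →ₗ[F] ↥U :=
    (LinearMap.fst F M N).restrict (fun x hx => by rw [← hWU]; exact Submodule.mem_map_of_mem hx)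
    with hπdef
  set π₂ : ↥W →ₗ[F] ↥V :=
    (LinearMap.snd F M N).restrict (fun x hx => by rw [← hWV]; exact Submodule.mem_map_of_mem hx)
    with hπ₂def
  have hπ : Function.Surjective π := by
    intro u
    have : (u : M) ∈ W.map (LinearMap.fst F M N) := hWU.symm ▸ u.2
    obtain ⟨w, hw, hwx⟩ := this
    exact ⟨⟨w, hw⟩, Subtype.ext hwx⟩
  have hπ₂ : Function.Surjective π₂ := by
    intro v
    have : (v : N) ∈ W.map (LinearMap.snd F M N) := hWV.symm ▸ v.2
    obtain ⟨w, hw, hwx⟩ := this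
    exact ⟨⟨w, hw⟩, Subtype.ext hwx⟩
  set U₀ : Submodule F ↥U := W.comap ((LinearMap.inl F M N).comp U.subtype) with hU₀def
  set V₀ : Submodule F ↥V := W.comap ((LinearMap.inr F M N).comp V.subtype) with hV₀def
  have hmemU₀ : ∀ u : ↥U, u ∈ U₀ ↔ ((u : M), (0 : N)) ∈ W := fun u => Iff.rfl
  have hmemV₀ : ∀ v : ↥V, v ∈ V₀ ↔ ((0 : M), (v : N)) ∈ W := fun v => Iff.rfl
  set α : ↥W →ₗ[F] ↥U ⧸ U₀ := U₀.mkQ.comp π with hαdef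
  set β : ↥W →ₗ[F] ↥V ⧸ V₀ := V₀.mkQ.comp π₂ with hβdef
  have hα : Function.Surjective α := (U₀.mkQ_surjective).comp hπ
  have hβ : Function.Surjective β := (V₀.mkQ_surjective).comp hπ₂
  -- the two kernels agree
  have hker : LinearMap.ker α = LinearMap.ker β := by
    ext w
    have h1 : w ∈ LinearMap.ker α ↔ ((w : M × N).1, (0 : N)) ∈ W := by
      rw [LinearMap.mem_ker, hαdef, LinearMap.comp_apply, Submodule.mkQ_apply,
        Submodule.Quotient.mk_eq_zero]
      exact hmemU₀ (π w)
    have h2 : w ∈ LinearMap.ker β ↔ ((0 : M), (w : M × N).2) ∈ W := by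
      rw [LinearMap.mem_ker, hβdef, LinearMap.comp_apply, Submodule.mkQ_apply,
        Submodule.Quotient.mk_eq_zero]
      exact hmemV₀ (π₂ w)
    rw [h1, h2]
    constructor
    · intro h
      have : ((0 : M), (w : M × N).2) = (w : M × N) - ((w : M × N).1, (0 : N)) := by
        ext <;> simp
      rw [this]; exact W.sub_mem w.2 h
    · intro h
      have : ((w : M × N).1, (0 : N)) = (w : M × N) - ((0 : M), (w : M × N).2) := by
        ext <;> simp
      rw [this]; exact W.sub_mem w.2 h
  -- the isomorphism between the quotients
  set αbar : (↥W ⧸ LinearMap.ker α) →ₗ[F] ↥U ⧸ U₀ := (LinearMap.ker α).liftQ α le_rfl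
    with hαbardef
  set βbar : (↥W ⧸ LinearMap.ker α) →ₗ[F] ↥V ⧸ V₀ := (LinearMap.ker α).liftQ β (le_of_eq hker)
    with hβbardef
  have hαbar_bij : Function.Bijective αbar := by
    constructor
    · rw [← LinearMap.ker_eq_bot]
      exact Submodule.ker_liftQ_eq_bot _ _ _ le_rfl
    · intro x
      obtain ⟨w, rfl⟩ := hα x
      exact ⟨Submodule.Quotient.mk w, Submodule.liftQ_apply _ _ _⟩
  have hβbar_bij : Function.Bijective βbar := by
    constructor
    · rw [← LinearMap.ker_eq_bot]
      exact Submodule.ker_liftQ_eq_bot _ _ _ (le_of_eq hker.symm)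
    · intro x
      obtain ⟨w, rfl⟩ := hβ x
      exact ⟨Submodule.Quotient.mk w, Submodule.liftQ_apply _ _ _⟩
  set e₁ : (↥W ⧸ LinearMap.ker α) ≃ₗ[F] ↥U ⧸ U₀ := LinearEquiv.ofBijective αbar hαbar_bij
    with he₁def
  set e₂ : (↥W ⧸ LinearMap.ker α) ≃ₗ[F] ↥V ⧸ V₀ := LinearEquiv.ofBijective βbar hβbar_bij
    with he₂def
  set φ : (↥U ⧸ U₀) ≃ₗ[F] ↥V ⧸ V₀ := e₁.symm.trans e₂ with hφdef
  have key : ∀ w : ↥W, φ (Submodule.Quotient.mk (π w)) = Submodule.Quotient.mk (π₂ w) := by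
    intro w
    have h1 : e₁ (Submodule.Quotient.mk w) = Submodule.Quotient.mk (π w) := rfl
    have h2 : φ (e₁ (Submodule.Quotient.mk w)) = e₂ (Submodule.Quotient.mk w) := by
      rw [hφdef]
      simp only [LinearEquiv.trans_apply, LinearEquiv.symm_apply_apply]
    rw [← h1, h2]
    rfl
  refine ⟨U₀, V₀, φ, ?_, ?_, ?_⟩
  · -- psi = W
    ext x
    rw [mem_psi]
    constructor
    · rintro ⟨hu, hv, h⟩
      obtain ⟨w, hw⟩ := hπ ⟨x.1, hu⟩
      rw [← hw, key w] at h
      have h' : π₂ w - ⟨x.2, hv⟩ ∈ V₀ := (Submodule.Quotient.eq V₀).mp h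
      rw [hmemV₀] at h'
      have h'' : ((0 : M), (π₂ w : N) - x.2) ∈ W := by
        have : ((π₂ w - ⟨x.2, hv⟩ : ↥V) : N) = (π₂ w : N) - x.2 := rfl
        rwa [this] at h'
      have hx1 : (w : M × N).1 = x.1 := congrArg Subtype.val hw
      have : x = (w : M × N) - ((0 : M), (π₂ w : N) - x.2) := by
        ext
        · show x.1 = (w : M × N).1 - 0
          rw [hx1, sub_zero]
        · show x.2 = (w : M × N).2 - ((w : M × N).2 - x.2)
          abel
      rw [this]
      exact W.sub_mem w.2 h''
    · intro hx
      refine ⟨?_, ?_, ?_⟩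
      · rw [← hWU]; exact ⟨x, hx, rfl⟩
      · rw [← hWV]; exact ⟨x, hx, rfl⟩
      · exact key ⟨x, hx⟩
  · -- dim U₀
    have hkπ₂ : ↥(LinearMap.ker π₂) ≃ₗ[F] ↥U₀ := by
      refine LinearEquiv.ofBijective
        (((π.comp (LinearMap.ker π₂).subtype)).codRestrict U₀ ?_) ⟨?_, ?_⟩
      · intro c
        rw [hmemU₀]
        have h2 : ((c : ↥W) : M × N).2 = 0 := congrArg Subtype.val c.2
        show (((c : ↥W) : M × N).1, (0 : N)) ∈ W
        rw [← h2]
        exact (c : ↥W).2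
      · intro a b h
        have h1 : ((a : ↥W) : M × N).1 = ((b : ↥W) : M × N).1 :=
          congrArg (Subtype.val ∘ Subtype.val) h
        have h2 : ((a : ↥W) : M × N).2 = ((b : ↥W) : M × N).2 := by
          have ha : ((a : ↥W) : M × N).2 = 0 := congrArg Subtype.val a.2
          have hb : ((b : ↥W) : M × N).2 = 0 := congrArg Subtype.val b.2
          rw [ha, hb]
        exact Subtype.ext (Subtype.ext (Prod.ext h1 h2))
      · intro u₀
        have hmem : (((u₀ : ↥U) : M), (0 : N)) ∈ W := (hmemU₀ _).mp u₀.2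
        refine ⟨⟨⟨(((u₀ : ↥U) : M), (0 : N)), hmem⟩, Subtype.ext rfl⟩, ?_⟩
        exact Subtype.ext (Subtype.ext rfl)
    have hr := LinearMap.finrank_range_add_finrank_ker π₂
    rw [LinearMap.range_eq_top.mpr hπ₂, finrank_top] at hr
    have h6 : finrank F ↥(LinearMap.ker π₂) = finrank F ↥U₀ := hkπ₂.finrank_eq
    omega
  · -- dim V₀
    have hkπ : ↥(LinearMap.ker π) ≃ₗ[F] ↥V₀ := by
      refine LinearEquiv.ofBijective
        (((π₂.comp (LinearMap.ker π).subtype)).codRestrict V₀ ?_) ⟨?_, ?_⟩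
      · intro c
        rw [hmemV₀]
        have h2 : ((c : ↥W) : M × N).1 = 0 := congrArg Subtype.val c.2
        show ((0 : M), ((c : ↥W) : M × N).2) ∈ W
        rw [← h2]
        exact (c : ↥W).2
      · intro a b h
        have h1 : ((a : ↥W) : M × N).2 = ((b : ↥W) : M × N).2 :=
          congrArg (Subtype.val ∘ Subtype.val) h
        have h2 : ((a : ↥W) : M × N).1 = ((b : ↥W) : M × N).1 := by
          have ha : ((a : ↥W) : M × N).1 = 0 := congrArg Subtype.val a.2
          have hb : ((b : ↥W) : M × N).1 = 0 := congrArg Subtype.val b.2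
          rw [ha, hb]
        exact Subtype.ext (Subtype.ext (Prod.ext h2 h1))
      · intro v₀
        have hmem : ((0 : M), (((v₀ : ↥V)) : N)) ∈ W := (hmemV₀ _).mp v₀.2
        refine ⟨⟨⟨((0 : M), (((v₀ : ↥V)) : N)), hmem⟩, Subtype.ext rfl⟩, ?_⟩
        exact Subtype.ext (Subtype.ext rfl)
    have hr := LinearMap.finrank_range_add_finrank_ker π
    rw [LinearMap.range_eq_top.mpr hπ, finrank_top] at hr
    have h6 : finrank F ↥(LinearMap.ker π) = finrank F ↥V₀ := hkπ.finrank_eq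
    omega

end Struct

section CountProd
variable {F : Type} [Field F] [Fintype F]

local notation "qq" => Fintype.card F

lemma count_prod {M N : Type} [AddCommGroup M] [Module F M] [AddCommGroup N] [Module F N]
    [Finite M] [Finite N] (U : Submodule F M) (V : Submodule F N) (d e s : ℕ)
    (hd : finrank F ↥U = d) (he : finrank F ↥V = e) (hde : e ≤ d) (hs : s ≤ e) :
    Nat.card {W : Submodule F (M × N) //
        W.map (LinearMap.fst F M N) = U ∧ W.map (LinearMap.snd F M N) = V ∧
        finrank F ↥W = d + e - s} =
      Nat.card {A : Submodule F ↥U // finrank F ↥A = d - s} *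
        (Nat.card {B : Submodule F ↥V // finrank F ↥B = e - s} *
          ∏ j ∈ range s, (qq ^ s - qq ^ j)) := by
  classical
  haveI : ∀ A : Submodule F ↥U, Finite (↥U ⧸ A) := fun A => Quotient.finite _
  haveI : ∀ B : Submodule F ↥V, Finite (↥V ⧸ B) := fun B => Quotient.finite _
  haveI hfin : ∀ (A : Submodule F ↥U) (B : Submodule F ↥V),
      Finite ((↥U ⧸ A) ≃ₗ[F] ↥V ⧸ B) := fun A B =>
    Finite.of_injective (fun f => (⇑f : (↥U ⧸ A) → (↥V ⧸ B))) DFunLike.coe_injective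
  set Ψ : (Σ (A : {A : Submodule F ↥U // finrank F ↥A = d - s})
      (B : {B : Submodule F ↥V // finrank F ↥B = e - s}), (↥U ⧸ A.1) ≃ₗ[F] ↥V ⧸ B.1) →
      {W : Submodule F (M × N) //
        W.map (LinearMap.fst F M N) = U ∧ W.map (LinearMap.snd F M N) = V ∧
        finrank F ↥W = d + e - s} :=
    fun x => ⟨psi U V x.1.1 x.2.1.1 x.2.2, psi_map_fst _ _ _, psi_map_snd _ _ _, by
      have h := psi_finrank x.1.1 x.2.1.1 x.2.2
      have hq := Submodule.finrank_quotient_add_finrank x.2.1.1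
      have hB := x.2.1.2
      omega⟩ with hΨ
  have hinj : Function.Injective Ψ := by
    rintro ⟨⟨A, hA⟩, ⟨B, hB⟩, φ⟩ ⟨⟨A', hA'⟩, ⟨B', hB'⟩, φ'⟩ h
    have hval : psi U V A B φ = psi U V A' B' φ' := congrArg Subtype.val h
    have eA : A = A' := by
      ext u; rw [psi_rec_U₀ A B φ u, psi_rec_U₀ A' B' φ' u, hval]
    subst eA
    have eB : B = B' := by
      ext v; rw [psi_rec_V₀ A B φ v, psi_rec_V₀ A B' φ' v, hval]
    subst eB
    have eφ : φ = φ' := by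
      have hpt : ∀ u : ↥U, φ (Submodule.Quotient.mk u) = φ' (Submodule.Quotient.mk u) := by
        intro u
        obtain ⟨v, hv⟩ := B.mkQ_surjective (φ (Submodule.Quotient.mk u))
        have h1 : ((u : M), (v : N)) ∈ psi U V A B φ :=
          (psi_rec_phi A B φ u v).mp hv.symm
        rw [hval] at h1
        have h2 : φ' (Submodule.Quotient.mk u) = Submodule.Quotient.mk v :=
          (psi_rec_phi A B φ' u v).mpr h1
        exact hv.symm.trans h2.symm
      refine LinearEquiv.toLinearMap_injective (LinearMap.ext fun x => ?_)
      obtain ⟨u, rfl⟩ := A.mkQ_surjective x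
      exact hpt u
    cases eφ
    rfl
  have hsurj : Function.Surjective Ψ := by
    rintro ⟨W, hWU, hWV, hWr⟩
    obtain ⟨U₀, V₀, φ, hpsi, hdim1, hdim2⟩ := psi_surjective W hWU hWV
    refine ⟨⟨⟨U₀, by omega⟩, ⟨V₀, by omega⟩, φ⟩, ?_⟩
    exact Subtype.ext hpsi
  rw [← Nat.card_congr (Equiv.ofBijective Ψ ⟨hinj, hsurj⟩)]
  letI : Fintype {A : Submodule F ↥U // finrank F ↥A = d - s} := Fintype.ofFinite _
  letI : Fintype {B : Submodule F ↥V // finrank F ↥B = e - s} := Fintype.ofFinite _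
  letI : ∀ (A : {A : Submodule F ↥U // finrank F ↥A = d - s})
      (B : {B : Submodule F ↥V // finrank F ↥B = e - s}),
      Fintype ((↥U ⧸ A.1) ≃ₗ[F] ↥V ⧸ B.1) := fun A B => Fintype.ofFinite _
  have hcardE : ∀ (A : {A : Submodule F ↥U // finrank F ↥A = d - s})
      (B : {B : Submodule F ↥V // finrank F ↥B = e - s}),
      Fintype.card ((↥U ⧸ A.1) ≃ₗ[F] ↥V ⧸ B.1) = ∏ j ∈ range s, (qq ^ s - qq ^ j) := by
    intro A B
    rw [← Nat.card_eq_fintype_card]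
    refine card_linearEquivs _ _ s ?_ ?_
    · have h1 := Submodule.finrank_quotient_add_finrank A.1
      have h2 := A.2
      omega
    · have h1 := Submodule.finrank_quotient_add_finrank B.1
      have h2 := B.2
      omega
  rw [Nat.card_eq_fintype_card, Fintype.card_sigma]
  rw [Finset.sum_congr rfl (fun A _ => by
    rw [Fintype.card_sigma,
      Finset.sum_congr rfl (fun B _ => hcardE A B), Finset.sum_const, Finset.card_univ,
      smul_eq_mul])]
  rw [Finset.sum_const, Finset.card_univ, smul_eq_mul]
  rw [Nat.card_eq_fintype_card, Nat.card_eq_fintype_card]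

lemma cast_prod_pow_sub (n s : ℕ) (hs : s ≤ n) :
    ((∏ j ∈ range s, (qq ^ n - qq ^ j) : ℕ) : ℤ) =
      ∏ j ∈ range s, ((qq : ℤ) ^ n - (qq : ℤ) ^ j) := by
  rw [Nat.cast_prod]
  refine Finset.prod_congr rfl fun j hj => ?_
  have hle : qq ^ j ≤ qq ^ n :=
    Nat.pow_le_pow_right Fintype.card_pos (le_trans (le_of_lt (mem_range.mp hj)) hs)
  rw [Nat.cast_sub hle]
  push_cast
  ring

lemma card_subspaces_int {M : Type} [AddCommGroup M] [Module F M] [Finite M]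
    (s : ℕ) (hs : s ≤ finrank F M) :
    ((Nat.card {W : Submodule F M // finrank F ↥W = s} : ℕ) : ℤ) =
      (gaussBinom (finrank F M) s).eval (qq : ℤ) := by
  have hq2 : (2 : ℤ) ≤ (qq : ℤ) := by exact_mod_cast Fintype.one_lt_card
  apply mul_right_cancel₀ (aprod_pos ((qq : ℤ)) hq2 s).ne'
  rw [gauss_eval_mul, ← cast_prod_pow_sub s s le_rfl, ← cast_prod_pow_sub (finrank F M) s hs,
    ← Nat.cast_mul, card_subspaces_mul s hs]

end CountProd

/-- The number of subspaces `W ≤ F_q^{n₁+n₂}` of dimension `d+e-s` projecting onto given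
subspaces `U` (of dimension `d`) and `V` (of dimension `e`) is
`[d choose s]_q [e choose s]_q (q^s-1)(q^s-q)⋯(q^s-q^{s-1})`. -/
theorem count_subspaces_with_projections {F : Type} [Field F] [Fintype F] {n₁ n₂ : ℕ}
    (U : Submodule F (Fin n₁ → F)) (V : Submodule F (Fin n₂ → F)) (d e s : ℕ)
    (hd : Module.finrank F U = d) (he : Module.finrank F V = e)
    (hde : e ≤ d) (hs : s ≤ e) :
    (Nat.card {W : Submodule F ((Fin n₁ ⊕ Fin n₂) → F) //
        W.map (LinearMap.funLeft F F Sum.inl) = U ∧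
        W.map (LinearMap.funLeft F F Sum.inr) = V ∧
        Module.finrank F W = d + e - s} : ℤ) =
      (gaussBinom d s).eval (Fintype.card F : ℤ) * (gaussBinom e s).eval (Fintype.card F : ℤ) *
        ∏ j ∈ Finset.range s, ((Fintype.card F : ℤ) ^ s - (Fintype.card F : ℤ) ^ j) := by
  classical
  have hsd : s ≤ d := le_trans hs hde
  set ee : ((Fin n₁ ⊕ Fin n₂) → F) ≃ₗ[F] (Fin n₁ → F) × (Fin n₂ → F) :=
    LinearEquiv.sumArrowLequivProdArrow (Fin n₁) (Fin n₂) F F with heedef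
  have hmap1 : ∀ W : Submodule F ((Fin n₁ ⊕ Fin n₂) → F),
      (W.map (ee : _ →ₗ[F] _)).map (LinearMap.fst F (Fin n₁ → F) (Fin n₂ → F)) =
        W.map (LinearMap.funLeft F F Sum.inl) := by
    intro W
    rw [← Submodule.map_comp]
    congr 1
  have hmap2 : ∀ W : Submodule F ((Fin n₁ ⊕ Fin n₂) → F),
      (W.map (ee : _ →ₗ[F] _)).map (LinearMap.snd F (Fin n₁ → F) (Fin n₂ → F)) =
        W.map (LinearMap.funLeft F F Sum.inr) := by
    intro W
    rw [← Submodule.map_comp]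
    congr 1
  have Esub : {W : Submodule F ((Fin n₁ ⊕ Fin n₂) → F) //
        W.map (LinearMap.funLeft F F Sum.inl) = U ∧
        W.map (LinearMap.funLeft F F Sum.inr) = V ∧
        Module.finrank F W = d + e - s} ≃
      {W : Submodule F ((Fin n₁ → F) × (Fin n₂ → F)) //
        W.map (LinearMap.fst F (Fin n₁ → F) (Fin n₂ → F)) = U ∧
        W.map (LinearMap.snd F (Fin n₁ → F) (Fin n₂ → F)) = V ∧
        finrank F ↥W = d + e - s} := by
    refine (Submodule.orderIsoMapComap ee).toEquiv.subtypeEquiv fun W => ?_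
    have happ : (Submodule.orderIsoMapComap ee).toEquiv W = W.map (ee : _ →ₗ[F] _) := rfl
    rw [happ, hmap1 W, hmap2 W, LinearEquiv.finrank_map_eq]
  rw [Nat.card_congr Esub, count_prod U V d e s hd he hde hs]
  have hq2 : (2 : ℤ) ≤ ((Fintype.card F : ℕ) : ℤ) := by exact_mod_cast Fintype.one_lt_card
  have hA : ((Nat.card {A : Submodule F ↥U // finrank F ↥A = d - s} : ℕ) : ℤ) =
      (gaussBinom d s).eval ((Fintype.card F : ℕ) : ℤ) := by
    rw [card_subspaces_int (d - s) (by rw [hd]; omega), hd]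
    exact gauss_symm_eval _ hq2 hsd
  have hB : ((Nat.card {B : Submodule F ↥V // finrank F ↥B = e - s} : ℕ) : ℤ) =
      (gaussBinom e s).eval ((Fintype.card F : ℕ) : ℤ) := by
    rw [card_subspaces_int (e - s) (by rw [he]; omega), he]
    exact gauss_symm_eval _ hq2 hs
  rw [Nat.cast_mul, Nat.cast_mul, cast_prod_pow_sub s s le_rfl, hA, hB]
  ring
end

section
/- Let G = ([n], E) be a graph, q a prime power, P a size-i independent set of G, and U ∈ Gr(i, n, q, G)_{P,Q} a totally-isotropic subspace of the graphical matrix space B_G whose lexicographically-first nonzero Plücker coordinate is at P and whose support set outside P is Q. If the induced subgraph G[P ∪ Q] contains a path between two distinct vertices u, v ∈ P, then no such U exists (i.e., Gr(i, n, q, G)_{P,Q} = ∅). -/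
open Matrix

/-- The Plücker coordinate of (the column span of) `T` at the set `R` is nonzero:
some (equivalently any) `R`-indexed row submatrix of `T` is invertible. -/
def PluckerNonzero {F : Type} [Field F] {n i : ℕ} (T : Matrix (Fin n) (Fin i) F)
    (R : Finset (Fin n)) : Prop :=
  ∃ g : Fin i → Fin n, Function.Injective g ∧ Set.range g = ↑R ∧ (T.submatrix g id).det ≠ 0

/-- The lexicographic order on finite subsets of `[n]`, via sorted lists. -/
def LexLt {n : ℕ} (A B : Finset (Fin n)) : Prop :=
  List.Lex (· < ·) (A.sort (· ≤ ·)) (B.sort (· ≤ ·))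

/-- If the induced subgraph `G[P ∪ Q]` contains a path between two distinct vertices
`u, v ∈ P`, then there is no `i`-dimensional totally-isotropic subspace `U` of the
graphical matrix space `B_G` with `P_U = P` and `Q_U = Q`;
i.e. `Gr(i, n, q, G)_{P,Q} = ∅`. -/
theorem grPQ_empty_of_path {F : Type} [Field F] [Fintype F] {n i : ℕ}
    (G : SimpleGraph (Fin n)) (P Q : Finset (Fin n))
    (hPcard : P.card = i) (hPind : ∀ a ∈ P, ∀ b ∈ P, ¬G.Adj a b)
    (U : Submodule F (Fin n → F)) (T : Matrix (Fin n) (Fin i) F)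
    (hind : LinearIndependent F Tᵀ)
    (hspan : Submodule.span F (Set.range Tᵀ) = U)
    (htot : IsTotallyIsotropic (graphSpace F G) U)
    (hP : PluckerNonzero T P)
    (hlex : ∀ R : Finset (Fin n), R.card = i → PluckerNonzero T R → ¬LexLt R P)
    (hQ : ∀ j : Fin n, j ∈ Q ↔ j ∉ P ∧ T j ≠ 0)
    (u v : Fin n) (hu : u ∈ P) (hv : v ∈ P) (huv : u ≠ v)
    (hpath : (G.induce (↑(P ∪ Q) : Set (Fin n))).Reachable
        ⟨u, Finset.mem_coe.mpr (Finset.mem_union_left Q hu)⟩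
        ⟨v, Finset.mem_coe.mpr (Finset.mem_union_left Q hv)⟩) :
    False := by
  classical
  -- Step 1: adjacency forces rows to be "proportional" in the 2x2-minor sense
  have hcol : ∀ c : Fin i, Tᵀ c ∈ U := by
    intro c
    rw [← hspan]
    exact Submodule.subset_span ⟨c, rfl⟩
  have hdep : ∀ a b : Fin n, G.Adj a b → ∀ c d : Fin i,
      T a c * T b d - T b c * T a d = 0 := by
    intro a b hadj c d
    have hne : a ≠ b := hadj.ne
    have hB : elemAlt a b ∈ graphSpace F G :=
      Submodule.subset_span ⟨a, b, hadj, rfl⟩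
    have h0 := htot (Tᵀ c) (hcol c) (Tᵀ d) (hcol d) (elemAlt a b) hB
    have hcalc : (Tᵀ c) ⬝ᵥ (elemAlt a b) *ᵥ (Tᵀ d)
        = T a c * T b d - T b c * T a d := by
      have hin : ∀ k : Fin n, (elemAlt a b *ᵥ (Tᵀ d)) k
          = (if k = a then T b d else 0) + (if k = b then -T a d else 0) := by
        intro k
        simp only [mulVec, dotProduct, elemAlt, transpose_apply, ite_mul, one_mul,
          neg_mul, zero_mul, ite_and]
        by_cases hka : k = a
        · subst hka
          simp [hne, Finset.sum_ite_eq' Finset.univ b (fun l => T l d)]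
        · by_cases hkb : k = b
          · subst hkb
            simp [hka, Finset.sum_ite_eq' Finset.univ a (fun l => -T l d)]
          · simp [hka, hkb]
      simp only [dotProduct, hin, transpose_apply, mul_add, mul_ite, mul_zero, mul_neg,
        Finset.sum_add_distrib, Finset.sum_ite_eq' Finset.univ, Finset.mem_univ, if_true]
      ring
    rw [hcalc] at h0
    exact h0
  -- rows indexed by P are nonzero
  obtain ⟨g, hginj, hgrange, hgdet⟩ := hP
  have hnzP : ∀ a ∈ P, T a ≠ 0 := by
    intro a haP h0
    have : a ∈ Set.range g := hgrange ▸ Finset.mem_coe.mpr haP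
    obtain ⟨k, rfl⟩ := this
    exact hgdet (Matrix.det_eq_zero_of_row_eq_zero k (fun j => by
      simpa using congrFun h0 j))
  have hnz : ∀ a ∈ P ∪ Q, T a ≠ 0 := by
    intro a ha
    rcases Finset.mem_union.mp ha with h | h
    · exact hnzP a h
    · exact ((hQ a).mp h).2
  -- one adjacency step gives scalar proportionality
  have hstep : ∀ a b : Fin n, G.Adj a b → T a ≠ 0 → T b ≠ 0 →
      ∃ c : F, c ≠ 0 ∧ T b = c • T a := by
    intro a b hadj ha hb
    obtain ⟨c0, hc0⟩ : ∃ c0, T a c0 ≠ 0 := by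
      by_contra h
      push_neg at h
      exact ha (funext h)
    refine ⟨T b c0 * (T a c0)⁻¹, ?_, ?_⟩
    · intro h0
      have hbc0 : T b c0 = 0 := by
        rcases mul_eq_zero.mp h0 with h | h
        · exact h
        · exact absurd (inv_eq_zero.mp h) hc0
      apply hb
      funext d
      have hbd : T a c0 * T b d = T b c0 * T a d := by
        linear_combination hdep a b hadj c0 d
      have h1 : T a c0 * T b d = 0 := by rw [hbd, hbc0, zero_mul]
      simpa using (mul_eq_zero.mp h1).resolve_left hc0
    · funext d
      have h := hdep a b hadj c0 d
      show T b d = T b c0 * (T a c0)⁻¹ * T a d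
      field_simp
      linear_combination h
  -- propagate along a walk in the induced graph
  have hchain : ∀ (x y : ↥(↑(P ∪ Q) : Set (Fin n)))
      (w : (G.induce (↑(P ∪ Q) : Set (Fin n))).Walk x y),
      ∃ c : F, c ≠ 0 ∧ T (y : Fin n) = c • T (x : Fin n) := by
    intro x y w
    induction w with
    | nil => exact ⟨1, one_ne_zero, (one_smul F _).symm⟩
    | cons hadj w ih =>
      rename_i a b z
      obtain ⟨c1, hc1, he1⟩ := hstep (a : Fin n) (b : Fin n) hadj
        (hnz _ a.2) (hnz _ b.2)
      obtain ⟨c2, hc2, he2⟩ := ih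
      exact ⟨c2 * c1, mul_ne_zero hc2 hc1, by rw [he2, he1, smul_smul]⟩
  obtain ⟨w⟩ := hpath
  obtain ⟨c, hc, hTv⟩ := hchain _ _ w
  -- two proportional rows inside the invertible P-submatrix: contradiction
  obtain ⟨ku, hku⟩ : ∃ ku, g ku = u := by
    have : u ∈ Set.range g := hgrange ▸ Finset.mem_coe.mpr hu
    exact this
  obtain ⟨kv, hkv⟩ : ∃ kv, g kv = v := by
    have : v ∈ Set.range g := hgrange ▸ Finset.mem_coe.mpr hv
    exact this
  have hkne : ku ≠ kv := fun h => huv (hku ▸ hkv ▸ h ▸ rfl)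
  set M := T.submatrix g id with hM
  have hrow : M kv = c • M ku := by
    funext d
    have h := congrFun hTv d
    simp only [Pi.smul_apply, smul_eq_mul] at h
    simp only [hM, Matrix.submatrix_apply, id, Pi.smul_apply, smul_eq_mul, hku, hkv]
    exact h
  have : M.det = 0 := by
    have h1 : M = M.updateRow kv (c • M ku) := by
      rw [← hrow, Matrix.updateRow_eq_self]
    rw [h1, Matrix.det_updateRow_smul, Matrix.det_updateRow_eq_zero hkne, mul_zero]
  exact hgdet this
end
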